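/- arXiv:1210.2420 — 2 statements merged into one kernel-verified Lean document; each statement's English description precedes it below -/
import Mathlib

section
/- Let R be a group with identity e and r, a ∈ R with a^(2k) = e, a^k central, a^k = r⁴, and (a³r³)² = e, for some k ≥ 12 with k ≡ 4 mod 8. Then a³r³ = r·a^(k-3). -/
theorem stmt_7 {R : Type*} [Group R] (r a : R) (k : ℕ)
    (hk : 12 ≤ k) (hk8 : k % 8 = 4)
    (h1 : a ^ (2 * k) = 1) (h2 : a ^ k ∈ Subgroup.center R) (h3 : a ^ k = r ^ 4)
    (h4 : (a ^ 3 * r ^ 3) ^ 2 = 1) :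
    a ^ 3 * r ^ 3 = r * a ^ (k - 3) := by
  have hc := (Subgroup.mem_center_iff.mp h2) r
  have hsum : a ^ (k - 3) * a ^ 3 = a ^ k := by
    rw [← pow_add]; congr 1; omega
  have hx : (r * a ^ (k - 3)) * (a ^ 3 * r ^ 3) = 1 := by
    calc (r * a ^ (k - 3)) * (a ^ 3 * r ^ 3)
        = r * (a ^ (k - 3) * a ^ 3) * r ^ 3 := by group
      _ = r * a ^ k * r ^ 3 := by rw [hsum]
      _ = a ^ k * r * r ^ 3 := by rw [← hc]
      _ = a ^ k * a ^ k := by rw [h3]; group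
      _ = a ^ (2 * k) := by rw [← pow_add]; ring_nf
      _ = 1 := h1
  have hinv : (a ^ 3 * r ^ 3)⁻¹ = a ^ 3 * r ^ 3 := by
    rw [pow_two] at h4
    exact inv_eq_of_mul_eq_one_right h4
  have := inv_eq_of_mul_eq_one_left hx
  rw [hinv] at this
  exact this
end

section
/- Let R be a group with identity e and r, a ∈ R satisfying a^(2k) = e, a^k central, a^k = r⁴, (ra)² = e, (a³r³)² = e, and r²a²r² = a², for some k ≥ 12 with k ≡ 4 mod 8. Then a⁴r = r·a^(2k-4). -/
theorem stmt_10 {R : Type*} [Group R] (r a : R) (k : ℕ)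
    (hk : 12 ≤ k) (hk8 : k % 8 = 4)
    (h1 : a ^ (2 * k) = 1) (h2 : a ^ k ∈ Subgroup.center R) (h3 : a ^ k = r ^ 4)
    (h4 : (r * a) ^ 2 = 1) (h5 : (a * r) ^ 2 = 1) (h6 : (a ^ 3 * r ^ 3) ^ 2 = 1)
    (h7 : r ^ 2 * a ^ 2 * r ^ 2 = a ^ 2) :
    a ^ 4 * r = r * a ^ (2 * k - 4) := by
  have hak : a ^ k * a ^ k = 1 := by rw [← pow_add, ← two_mul]; exact h1
  have hakinv : (a ^ k)⁻¹ = a ^ k := inv_eq_of_mul_eq_one_right hak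
  have hrinv : r⁻¹ = r ^ 3 * a ^ k := by
    apply inv_eq_of_mul_eq_one_right
    rw [← mul_assoc, ← pow_succ', ← h3]
    exact hak
  have hr3inv : (r ^ 3)⁻¹ = r * a ^ k := by
    apply inv_eq_of_mul_eq_one_right
    have : r ^ 3 * (r * a ^ k) = r ^ 4 * a ^ k := by
      rw [← mul_assoc, ← pow_succ]
    rw [this, ← h3]; exact hak
  have e1 : a * r = r⁻¹ * a⁻¹ := by
    have := eq_inv_of_mul_eq_one_left (by rw [← sq]; exact h5 : (a * r) * (a * r) = 1)
    rwa [mul_inv_rev] at this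
  have e2 : a ^ 3 * r ^ 3 = (r ^ 3)⁻¹ * (a ^ 3)⁻¹ := by
    have := eq_inv_of_mul_eq_one_left
      (by rw [← sq]; exact h6 : (a ^ 3 * r ^ 3) * (a ^ 3 * r ^ 3) = 1)
    rwa [mul_inv_rev] at this
  have hfin : a ^ 4 * a ^ (2 * k - 4) = 1 := by
    rw [← pow_add]
    have : 4 + (2 * k - 4) = 2 * k := by omega
    rw [this]; exact h1
  have key : a ^ 4 * r = r * (a ^ 4)⁻¹ := by
    have h4a : a ^ 4 = a ^ 3 * a := by rw [← pow_succ]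
    calc a ^ 4 * r = a ^ 3 * (a * r) := by rw [h4a, mul_assoc]
      _ = a ^ 3 * (r ^ 3 * a ^ k * a⁻¹) := by rw [e1, hrinv]
      _ = (a ^ 3 * r ^ 3) * (a ^ k * a⁻¹) := by group
      _ = (r * a ^ k) * (a ^ 3)⁻¹ * (a ^ k * a⁻¹) := by rw [e2, hr3inv]
      _ = r * (a ^ k * a ^ k * ((a ^ 3)⁻¹ * a⁻¹)) := by
          have hc : (a ^ 3)⁻¹ * a ^ k = a ^ k * (a ^ 3)⁻¹ :=
            (((Commute.refl a).pow_pow 3 k).inv_left).eq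
          simp only [mul_assoc]
          rw [← mul_assoc ((a ^ 3)⁻¹), hc, mul_assoc]
      _ = r * ((a ^ 3)⁻¹ * a⁻¹) := by rw [hak, one_mul]
      _ = r * (a ^ 4)⁻¹ := by group
  rw [key]
  congr 1
  exact inv_eq_of_mul_eq_one_right hfin
end
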